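/- There exist λ > 0 and r > 0 with the following property. For every k ∈ ℕ, every finite sequence n_1,…,n_p of positive integers, and every unital *-homomorphism π : M_{n_1}(ℂ) ⊕ ⋯ ⊕ M_{n_p}(ℂ) → M_k(ℂ), let H = {v ∈ U_k : v·π(x) = π(x)·v for all x} and let 𝒳 = {x ∈ M_k(ℂ) : x* = −x, and Re Tr(x a*) = 0 for every a ∈ M_k(ℂ) with a* = −a commuting with π(x') for all x'} (the orthogonal complement, with respect to the real inner product Re Tr(x y*), of the skew-Hermitian part of the commutant of π inside the skew-Hermitian matrices). Then for all x, y ∈ 𝒳 with ‖x‖ < r and ‖y‖ < r: inf_{v ∈ H} |exp(x) − exp(y)·v|₂ ≥ λ·|x − y|₂. -/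

import Mathlib

open Matrix

/-- The normalized trace `tr_k` on `M_k(ℂ)`. -/
noncomputable def trN {k : ℕ} (x : Matrix (Fin k) (Fin k) ℂ) : ℂ :=
  x.trace / (k : ℂ)

/-- The operator norm on `M_k(ℂ)` (acting on Euclidean space). -/
noncomputable def opN {k : ℕ} (x : Matrix (Fin k) (Fin k) ℂ) : ℝ :=
  ‖Matrix.toEuclideanCLM (𝕜 := ℂ) x‖

/-- The normalized Hilbert–Schmidt norm `|z|₂ = (tr_k(z*z))^{1/2}`. -/
noncomputable def hsN {k : ℕ} (x : Matrix (Fin k) (Fin k) ℂ) : ℝ :=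
  Real.sqrt (trN (star x * x)).re

/-- The finite-dimensional C*-algebra `M_{n_1}(ℂ) ⊕ ⋯ ⊕ M_{n_p}(ℂ)`. -/
abbrev NA {p : ℕ} (n : Fin p → ℕ) := ∀ j : Fin p, Matrix (Fin (n j)) (Fin (n j)) ℂ

/-- Membership in `𝒳`: `x` is skew-Hermitian and orthogonal (w.r.t. the real
inner product `Re Tr(x a*)`) to every skew-Hermitian matrix commuting with the
range of `f`. -/
def memX {k : ℕ} {B : Type*} (f : B → Matrix (Fin k) (Fin k) ℂ)
    (x : Matrix (Fin k) (Fin k) ℂ) : Prop :=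
  star x = -x ∧
  ∀ a : Matrix (Fin k) (Fin k) ℂ,
    (star a = -a ∧ ∀ w, a * f w = f w * a) → ((x * star a).trace).re = 0

namespace Stmt12Aux

open NormedSpace

set_option synthInstance.maxHeartbeats 1000000
set_option maxHeartbeats 1000000

variable {k : ℕ}

/-! ### Operator norm lemmas -/

lemma opN_conjT (A : Matrix (Fin k) (Fin k) ℂ) : opN Aᴴ = opN A := by
  unfold opN
  rw [← Matrix.star_eq_conjTranspose]
  have h : Matrix.toEuclideanCLM (𝕜 := ℂ) (star A) = star (Matrix.toEuclideanCLM (𝕜 := ℂ) A) :=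
    map_star (Matrix.toEuclideanCLM (𝕜 := ℂ)) A
  rw [h, ContinuousLinearMap.star_eq_adjoint]
  exact ContinuousLinearMap.adjoint.norm_map _

lemma opN_mul_le (A B : Matrix (Fin k) (Fin k) ℂ) : opN (A * B) ≤ opN A * opN B := by
  unfold opN
  have h : Matrix.toEuclideanCLM (𝕜 := ℂ) (A * B) =
      Matrix.toEuclideanCLM (𝕜 := ℂ) A * Matrix.toEuclideanCLM (𝕜 := ℂ) B := map_mul _ _ _
  rw [h]; exact norm_mul_le _ _

lemma opN_pow_le (A : Matrix (Fin k) (Fin k) ℂ) (n : ℕ) : opN (A ^ (n+1)) ≤ opN A ^ (n+1) := by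
  induction n with
  | zero => simp [pow_one]
  | succ m ih =>
      calc opN (A ^ (m+2)) = opN (A * A ^ (m+1)) := by rw [← pow_succ']
        _ ≤ opN A * opN (A ^ (m+1)) := opN_mul_le _ _
        _ ≤ opN A * opN A ^ (m+1) := mul_le_mul_of_nonneg_left ih (norm_nonneg _)
        _ = opN A ^ (m+2) := by ring

/-! ### An operator norm bound for `exp z - 1` in a Banach algebra -/

lemma exp_sub_one_opnorm {E : Type*} [NormedRing E] [NormedAlgebra ℂ E] [CompleteSpace E]
    (z : E) (hz : ‖z‖ ≤ 1/10) : ‖exp z - 1‖ ≤ 1/9 := by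
  set g : ℕ → E := fun n => (n.factorial : ℂ)⁻¹ • z ^ n with hg
  have hgs : Summable g := expSeries_summable' (𝕂 := ℂ) z
  have hexp : exp z - 1 = ∑' n : ℕ, g (n + 1) := by
    have h := exp_eq_tsum (𝕂 := ℂ) (𝔸 := E)
    rw [congrFun h z, Summable.tsum_eq_zero_add hgs]
    have h0 : g 0 = 1 := by simp [hg]
    rw [h0]; abel
  have hbound : ∀ n : ℕ, ‖g (n + 1)‖ ≤ (1/10:ℝ) ^ (n+1) := by
    intro n
    have h1 : ‖g (n+1)‖ = (((n+1).factorial : ℝ))⁻¹ * ‖z ^ (n+1)‖ := by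
      rw [hg]; simp only [norm_smul, norm_inv]; norm_num
    have h2 : ‖z ^ (n+1)‖ ≤ (1/10:ℝ) ^ (n+1) :=
      le_trans (norm_pow_le' z (Nat.succ_pos n))
        (pow_le_pow_left₀ (norm_nonneg _) hz _)
    have h3 : (((n+1).factorial : ℝ))⁻¹ ≤ 1 := by
      rw [inv_le_one_iff₀]
      right
      exact_mod_cast Nat.one_le_iff_ne_zero.mpr (Nat.factorial_pos _).ne'
    calc ‖g (n+1)‖ = (((n+1).factorial : ℝ))⁻¹ * ‖z ^ (n+1)‖ := h1
      _ ≤ 1 * ((1/10:ℝ) ^ (n+1)) := mul_le_mul h3 h2 (norm_nonneg _) (by norm_num)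
      _ = (1/10:ℝ) ^ (n+1) := one_mul _
  have hgeo : Summable fun n : ℕ => (1/10:ℝ)^(n+1) := by
    have h : (fun n : ℕ => (1/10:ℝ)^(n+1)) = fun n : ℕ => (1/10:ℝ) * (1/10:ℝ)^n := by
      funext n; rw [pow_succ']
    rw [h]
    exact (summable_geometric_of_lt_one (by norm_num) (by norm_num)).mul_left _
  have hnorm_sum : Summable fun n : ℕ => ‖g (n+1)‖ :=
    Summable.of_nonneg_of_le (fun _ => norm_nonneg _) hbound hgeo
  have hval : ∑' n : ℕ, (1/10:ℝ)^(n+1) = 1/9 := by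
    have h : (fun n : ℕ => (1/10:ℝ)^(n+1)) = fun n : ℕ => (1/10:ℝ) * (1/10:ℝ)^n := by
      funext n; rw [pow_succ']
    rw [h, tsum_mul_left, tsum_geometric_of_lt_one (by norm_num) (by norm_num)]
    norm_num
  calc ‖exp z - 1‖ = ‖∑' n : ℕ, g (n+1)‖ := by rw [hexp]
    _ ≤ ∑' n : ℕ, ‖g (n+1)‖ := norm_tsum_le_tsum_norm hnorm_sum
    _ ≤ ∑' n : ℕ, (1/10:ℝ)^(n+1) := Summable.tsum_le_tsum hbound hnorm_sum hgeo
    _ = 1/9 := hval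

/-! ### Trace orthogonality lemmas -/

lemma re_zero_of_conj_neg {z : ℂ} (h : star z = -z) : z.re = 0 := by
  have := congrArg Complex.re h
  simp [Complex.star_def] at this
  linarith

lemma tr_re_skew (a : Matrix (Fin k) (Fin k) ℂ) (ha : star a = -a) : a.trace.re = 0 := by
  apply re_zero_of_conj_neg
  have h1 : (star a).trace = star a.trace := Matrix.trace_conjTranspose a
  rw [ha] at h1
  simpa using h1.symm

lemma tr_re_skew_mul_herm (a h : Matrix (Fin k) (Fin k) ℂ) (ha : star a = -a)
    (hh : star h = h) : ((a * h).trace).re = 0 := by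
  apply re_zero_of_conj_neg
  have h1 : (star (a * h)).trace = star ((a * h).trace) := Matrix.trace_conjTranspose _
  have h2 : star (a * h) = -(h * a) := by rw [StarMul.star_mul, ha, hh]; noncomm_ring
  rw [h2] at h1
  rw [Complex.star_def] at h1 ⊢
  rw [← h1, Matrix.trace_neg, Matrix.trace_mul_comm]

lemma star_comm_range {B : Type*} [Star B] (π : B → Matrix (Fin k) (Fin k) ℂ)
    (hπ : ∀ w, π (star w) = star (π w)) (v : Matrix (Fin k) (Fin k) ℂ)
    (hv : ∀ w, v * π w = π w * v) (w : B) : star v * π w = π w * star v := by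
  have h1 := hv (star w)
  have h2 := congrArg star h1
  rw [StarMul.star_mul, StarMul.star_mul, hπ, star_star] at h2
  exact h2.symm

lemma orth_key {B : Type*} [Star B] (π : B → Matrix (Fin k) (Fin k) ℂ)
    (hπ : ∀ w, π (star w) = star (π w))
    (x y v : Matrix (Fin k) (Fin k) ℂ) (hx : memX π x) (hy : memX π y)
    (hv : ∀ w, v * π w = π w * v) :
    (((x - y) * star ((1 : Matrix (Fin k) (Fin k) ℂ) - v)).trace).re = 0 := by
  have hxy : star (x - y) = -(x - y) := by rw [star_sub, hx.1, hy.1]; abel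
  set a : Matrix (Fin k) (Fin k) ℂ := (2⁻¹ : ℂ) • (v - star v) with hadef
  have hstar2 : star (2⁻¹ : ℂ) = (2⁻¹ : ℂ) := by simp
  have hsa : star a = (2⁻¹ : ℂ) • (star v - v) := by
    rw [hadef, star_smul, star_sub, star_star, hstar2]
  have ha : star a = -a := by rw [hsa, hadef]; module
  have hacomm : ∀ w, a * π w = π w * a := by
    intro w
    rw [hadef, smul_mul_assoc, mul_smul_comm, sub_mul, mul_sub, hv w,
      star_comm_range π hπ v hv w]
  have hxa := hx.2 a ⟨ha, hacomm⟩
  have hya := hy.2 a ⟨ha, hacomm⟩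
  set h : Matrix (Fin k) (Fin k) ℂ := (2⁻¹ : ℂ) • (v + star v) with hhdef
  have hherm : star h = h := by
    rw [hhdef, star_smul, star_add, star_star, hstar2, add_comm]
  have hsplit : star ((1 : Matrix (Fin k) (Fin k) ℂ) - v) = 1 - (star a + h) := by
    rw [star_sub, star_one, hsa, hhdef]
    module
  have hherm_part : (((x - y) * h).trace).re = 0 := tr_re_skew_mul_herm _ _ hxy hherm
  have hskew_part : (((x - y) * star a).trace).re = 0 := by
    have hmul : (x - y) * star a = x * star a - y * star a := by noncomm_ring
    rw [hmul, Matrix.trace_sub]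
    simp [Complex.sub_re, hxa, hya]
  have hexpand : (x - y) * star ((1 : Matrix (Fin k) (Fin k) ℂ) - v) =
      (x - y) - ((x - y) * star a + (x - y) * h) := by
    rw [hsplit]; noncomm_ring
  rw [hexpand, Matrix.trace_sub, Matrix.trace_add]
  have htr : ((x - y).trace).re = 0 := tr_re_skew _ hxy
  simp only [Matrix.trace_sub] at htr
  simp [Complex.sub_re, Complex.add_re, hherm_part, hskew_part]
  simp [Complex.sub_re] at htr
  linarith

/-! ### Frobenius norm lemmas -/

attribute [local instance] Matrix.frobeniusSeminormedAddCommGroup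
  Matrix.frobeniusNormedAddCommGroup Matrix.frobeniusNormedSpace
  Matrix.frobeniusNormedRing Matrix.frobeniusNormedAlgebra

lemma nrm_sq' (a : Matrix (Fin k) (Fin k) ℂ) : ‖a‖ ^ 2 = ∑ i, ∑ j, ‖a i j‖ ^ 2 := by
  rw [Matrix.frobenius_norm_def, ← Real.rpow_natCast (_ ^ (1/2:ℝ)) 2,
    ← Real.rpow_mul (by positivity)]
  norm_num

lemma nrm_sq (a : Matrix (Fin k) (Fin k) ℂ) : ‖a‖ ^ 2 = ((a * star a).trace).re := by
  rw [nrm_sq']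
  simp [Matrix.trace, Matrix.diag, Matrix.mul_apply, Matrix.star_eq_conjTranspose,
    Matrix.conjTranspose_apply, Complex.mul_conj', Complex.re_sum, ← Complex.ofReal_pow]

lemma ip_comm (a b : Matrix (Fin k) (Fin k) ℂ) :
    ((a * star b).trace).re = ((b * star a).trace).re := by
  have h : b * star a = (a * star b)ᴴ := by
    simp [Matrix.star_eq_conjTranspose, Matrix.conjTranspose_mul]
  rw [h, Matrix.trace_conjTranspose]
  simp

lemma pythagoras (a b : Matrix (Fin k) (Fin k) ℂ) (h : ((a * star b).trace).re = 0) :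
    ‖a + b‖ ^ 2 = ‖a‖ ^ 2 + ‖b‖ ^ 2 := by
  have h' : ((b * star a).trace).re = 0 := (ip_comm b a).trans h
  have expand : (a + b) * star (a + b) =
      a * star a + (a * star b + (b * star a + b * star b)) := by
    rw [star_add]; noncomm_ring
  rw [nrm_sq, nrm_sq, nrm_sq, expand]
  simp [Matrix.trace_add, h, h']

lemma euclid_norm_sq (f : EuclideanSpace ℂ (Fin k)) : ‖f‖ ^ 2 = ∑ i, ‖f i‖ ^ 2 := by
  rw [EuclideanSpace.norm_eq, Real.sq_sqrt (by positivity)]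

lemma nrm_mul_le_opN (A B : Matrix (Fin k) (Fin k) ℂ) : ‖A * B‖ ≤ opN A * ‖B‖ := by
  have key : ‖A * B‖ ^ 2 ≤ (opN A * ‖B‖) ^ 2 := by
    have hcol : ∀ j, ∑ i, ‖(A * B) i j‖ ^ 2 ≤ (opN A) ^ 2 * ∑ i, ‖B i j‖ ^ 2 := by
      intro j
      set c : EuclideanSpace ℂ (Fin k) := (WithLp.equiv 2 _).symm (fun l => B l j) with hc
      set c2 : EuclideanSpace ℂ (Fin k) := (WithLp.equiv 2 _).symm (A.mulVec fun l => B l j)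
        with hc2
      have h1 : ‖c2‖ ≤ opN A * ‖c‖ := by
        have h : c2 = Matrix.toEuclideanCLM (𝕜 := ℂ) A c := by
          rw [hc, hc2]; rfl
        rw [h]
        exact (Matrix.toEuclideanCLM (𝕜 := ℂ) A).le_opNorm _
      have h2 := pow_le_pow_left₀ (norm_nonneg _) h1 2
      rw [euclid_norm_sq] at h2
      have hco : ∀ i, c2 i = (A * B) i j := by
        intro i; simp [hc2, Matrix.mulVec, Matrix.mul_apply, dotProduct]
      simp only [hco] at h2
      have hcoB : ∀ i, c i = B i j := fun i => rfl
      calc ∑ i, ‖(A * B) i j‖ ^ 2 ≤ (opN A * ‖c‖) ^ 2 := h2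
        _ = (opN A) ^ 2 * ∑ i, ‖c i‖ ^ 2 := by rw [mul_pow, euclid_norm_sq]
        _ = (opN A) ^ 2 * ∑ i, ‖B i j‖ ^ 2 := by simp only [hcoB]
    calc ‖A * B‖ ^ 2 = ∑ j, ∑ i, ‖(A * B) i j‖ ^ 2 := by
          rw [nrm_sq']; exact Finset.sum_comm
      _ ≤ ∑ j, (opN A) ^ 2 * ∑ i, ‖B i j‖ ^ 2 := Finset.sum_le_sum fun j _ => hcol j
      _ = (opN A) ^ 2 * ∑ j, ∑ i, ‖B i j‖ ^ 2 := by rw [← Finset.mul_sum]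
      _ = (opN A * ‖B‖) ^ 2 := by rw [mul_pow, nrm_sq', Finset.sum_comm]
  have hn : 0 ≤ opN A * ‖B‖ := mul_nonneg (norm_nonneg _) (norm_nonneg _)
  nlinarith [norm_nonneg (A * B)]

lemma nrm_mul_le_opN' (A B : Matrix (Fin k) (Fin k) ℂ) : ‖A * B‖ ≤ ‖A‖ * opN B := by
  calc ‖A * B‖ = ‖(A * B)ᴴ‖ := (Matrix.frobenius_norm_conjTranspose _).symm
    _ = ‖Bᴴ * Aᴴ‖ := by rw [Matrix.conjTranspose_mul]
    _ ≤ opN Bᴴ * ‖Aᴴ‖ := nrm_mul_le_opN _ _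
    _ = ‖A‖ * opN B := by rw [Matrix.frobenius_norm_conjTranspose, opN_conjT]; ring

/-! ### Series estimates -/

lemma pow_sub_pow {R : ℝ} (hR : 0 ≤ R) (x y : Matrix (Fin k) (Fin k) ℂ)
    (hx : opN x ≤ R) (hy : opN y ≤ R) (n : ℕ) :
    ‖x ^ (n+1) - y ^ (n+1)‖ ≤ ((n:ℝ)+1) * R ^ n * ‖x - y‖ := by
  induction n with
  | zero => simp
  | succ m ih =>
      have key : x ^ (m+2) - y ^ (m+2) =
          x * (x ^ (m+1) - y ^ (m+1)) + (x - y) * y ^ (m+1) := by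
        rw [pow_succ' x (m+1), pow_succ' y (m+1)]; noncomm_ring
      have h1 : ‖x * (x ^ (m+1) - y ^ (m+1))‖ ≤ R * (((m:ℝ)+1) * R ^ m * ‖x - y‖) :=
        le_trans (nrm_mul_le_opN _ _) (mul_le_mul hx ih (norm_nonneg _) hR)
      have h2 : ‖(x - y) * y ^ (m+1)‖ ≤ ‖x - y‖ * R ^ (m+1) :=
        le_trans (nrm_mul_le_opN' _ _)
          (mul_le_mul_of_nonneg_left
            (le_trans (opN_pow_le y m) (pow_le_pow_left₀ (norm_nonneg _) hy (m+1)))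
            (norm_nonneg _))
      calc ‖x ^ (m+2) - y ^ (m+2)‖
          ≤ ‖x * (x ^ (m+1) - y ^ (m+1))‖ + ‖(x - y) * y ^ (m+1)‖ := by
            rw [key]; exact norm_add_le _ _
        _ ≤ R * (((m:ℝ)+1) * R ^ m * ‖x - y‖) + ‖x - y‖ * R ^ (m+1) := add_le_add h1 h2
        _ = (((m+1:ℕ):ℝ)+1) * R ^ (m+1) * ‖x - y‖ := by push_cast; ring

lemma exp_diff (x y : Matrix (Fin k) (Fin k) ℂ)
    (hx : opN x ≤ 1/10) (hy : opN y ≤ 1/10) :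
    ‖exp x - exp y - (x - y)‖ ≤ (1/9) * ‖x - y‖ := by
  set g : ℕ → Matrix (Fin k) (Fin k) ℂ := fun n => (n.factorial : ℂ)⁻¹ • (x ^ n - y ^ n) with hg
  have hsx : Summable fun n : ℕ => (n.factorial : ℂ)⁻¹ • x ^ n := expSeries_summable' (𝕂 := ℂ) x
  have hsy : Summable fun n : ℕ => (n.factorial : ℂ)⁻¹ • y ^ n := expSeries_summable' (𝕂 := ℂ) y
  have hgs : Summable g := by
    have h : g = fun n => (n.factorial : ℂ)⁻¹ • x ^ n - (n.factorial : ℂ)⁻¹ • y ^ n := by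
      funext n; rw [hg]; simp [smul_sub]
    rw [h]; exact hsx.sub hsy
  have hexp : exp x - exp y = ∑' n, g n := by
    rw [exp_eq_tsum (𝕂 := ℂ)]
    simp only
    rw [← Summable.tsum_sub hsx hsy]
    exact tsum_congr fun n => by rw [hg]; simp [smul_sub]
  have hshift : exp x - exp y - (x - y) = ∑' n, g (n + 2) := by
    rw [hexp, Summable.tsum_eq_zero_add hgs, Summable.tsum_eq_zero_add ((summable_nat_add_iff 1).mpr hgs)]
    have h0 : g 0 = 0 := by simp [hg]
    have h1 : g 1 = x - y := by simp [hg]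
    have hre : (fun b : ℕ => g (b + 1 + 1)) = fun b : ℕ => g (b + 2) := by
      funext b; norm_num
    rw [h0, h1, hre]
    abel
  have hbound : ∀ n : ℕ, ‖g (n + 2)‖ ≤ (1/10:ℝ) ^ (n+1) * ‖x - y‖ := by
    intro n
    have hfac : ‖g (n+2)‖ = (((n+2).factorial : ℝ))⁻¹ * ‖x ^ (n+2) - y ^ (n+2)‖ := by
      rw [hg]
      simp only [norm_smul, norm_inv]
      norm_num
    have hp := pow_sub_pow (by norm_num : (0:ℝ) ≤ 1/10) x y hx hy (n+1)
    have hF : ((n+2:ℕ):ℝ) ≤ ((n+2).factorial : ℝ) := by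
      exact_mod_cast Nat.self_le_factorial _
    have hFpos : (0:ℝ) < ((n+2).factorial : ℝ) := by
      exact_mod_cast Nat.factorial_pos _
    have hP : (0:ℝ) ≤ (1/10:ℝ)^(n+1) * ‖x - y‖ := by positivity
    calc ‖g (n+2)‖ = (((n+2).factorial : ℝ))⁻¹ * ‖x ^ (n+2) - y ^ (n+2)‖ := hfac
      _ ≤ (((n+2).factorial : ℝ))⁻¹ * (((n+2:ℕ):ℝ) * ((1/10:ℝ)^(n+1) * ‖x - y‖)) := by
          apply mul_le_mul_of_nonneg_left _ (inv_nonneg.mpr hFpos.le)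
          calc ‖x ^ (n+2) - y ^ (n+2)‖ ≤ (((n+1:ℕ):ℝ)+1) * (1/10:ℝ)^(n+1) * ‖x - y‖ := hp
            _ = ((n+2:ℕ):ℝ) * ((1/10:ℝ)^(n+1) * ‖x - y‖) := by push_cast; ring
      _ ≤ (((n+2).factorial : ℝ))⁻¹ * (((n+2).factorial : ℝ) * ((1/10:ℝ)^(n+1) * ‖x - y‖)) := by
          apply mul_le_mul_of_nonneg_left _ (inv_nonneg.mpr hFpos.le)
          exact mul_le_mul_of_nonneg_right hF hP
      _ = (1/10:ℝ)^(n+1) * ‖x - y‖ := by rw [inv_mul_cancel_left₀ hFpos.ne']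
  have hgeo : Summable fun n : ℕ => (1/10:ℝ)^(n+1) := by
    have h : (fun n : ℕ => (1/10:ℝ)^(n+1)) = fun n : ℕ => (1/10:ℝ) * (1/10:ℝ)^n := by
      funext n; rw [pow_succ']
    rw [h]
    exact (summable_geometric_of_lt_one (by norm_num) (by norm_num)).mul_left _
  have hsum : Summable fun n : ℕ => (1/10:ℝ)^(n+1) * ‖x - y‖ := hgeo.mul_right _
  have hnorm_sum : Summable fun n : ℕ => ‖g (n+2)‖ :=
    Summable.of_nonneg_of_le (fun _ => norm_nonneg _) hbound hsum
  have hval : ∑' n : ℕ, (1/10:ℝ)^(n+1) * ‖x - y‖ = (1/9) * ‖x - y‖ := by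
    rw [tsum_mul_right]
    have h : (fun n : ℕ => (1/10:ℝ)^(n+1)) = fun n : ℕ => (1/10:ℝ) * (1/10:ℝ)^n := by
      funext n; rw [pow_succ']
    rw [h, tsum_mul_left, tsum_geometric_of_lt_one (by norm_num) (by norm_num)]
    norm_num
  calc ‖exp x - exp y - (x - y)‖ = ‖∑' n : ℕ, g (n+2)‖ := by rw [hshift]
    _ ≤ ∑' n : ℕ, ‖g (n+2)‖ := norm_tsum_le_tsum_norm hnorm_sum
    _ ≤ ∑' n : ℕ, (1/10:ℝ)^(n+1) * ‖x - y‖ := Summable.tsum_le_tsum hbound hnorm_sum hsum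
    _ = (1/9) * ‖x - y‖ := hval

lemma continuous_toEuclideanCLM :
    Continuous (fun A : Matrix (Fin k) (Fin k) ℂ => Matrix.toEuclideanCLM (𝕜 := ℂ) A) := by
  let L : Matrix (Fin k) (Fin k) ℂ →ₗ[ℂ]
      (EuclideanSpace ℂ (Fin k) →L[ℂ] EuclideanSpace ℂ (Fin k)) :=
    { toFun := fun A => Matrix.toEuclideanCLM (𝕜 := ℂ) A
      map_add' := fun a b => map_add _ a b
      map_smul' := fun c a => map_smul _ c a }
  exact L.continuous_of_finiteDimensional

lemma opN_exp_sub_one (y : Matrix (Fin k) (Fin k) ℂ) (hy : opN y ≤ 1/10) :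
    opN (exp y - 1) ≤ 1/9 := by
  unfold opN
  have hφ : Matrix.toEuclideanCLM (𝕜 := ℂ) (exp y - 1) =
      exp (Matrix.toEuclideanCLM (𝕜 := ℂ) y) - 1 := by
    rw [map_sub, _root_.map_one]; exact congrArg (· - 1) (map_exp _ continuous_toEuclideanCLM y)
  rw [hφ]
  exact exp_sub_one_opnorm _ hy

/-! ### `hsN` in terms of the Frobenius norm -/

lemma hsN_eq (a : Matrix (Fin k) (Fin k) ℂ) : hsN a = ‖a‖ / Real.sqrt k := by
  unfold hsN trN
  have h1 : (star a * a).trace = (a * star a).trace := Matrix.trace_mul_comm _ _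
  have h2 : ((a * star a).trace / (k : ℂ)).re = ‖a‖ ^ 2 / (k : ℝ) := by
    have : ((k : ℕ) : ℂ) = ((k : ℝ) : ℂ) := by push_cast; ring
    rw [this, Complex.div_ofReal_re, nrm_sq]
  rw [h1, h2, Real.sqrt_div (by positivity), Real.sqrt_sq (norm_nonneg _)]

/-! ### The main quantitative estimate -/

lemma main_estimate {B : Type*} [Star B] (π : B → Matrix (Fin k) (Fin k) ℂ)
    (hπ : ∀ w, π (star w) = star (π w))
    (x y v : Matrix (Fin k) (Fin k) ℂ) (hx : memX π x) (hy : memX π y)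
    (hxr : opN x ≤ 1/10) (hyr : opN y ≤ 1/10)
    (hv : ∀ w, v * π w = π w * v) :
    (1/2 : ℝ) * ‖x - y‖ ≤ ‖exp x - exp y * v‖ := by
  set A : Matrix (Fin k) (Fin k) ℂ := x - y with hA
  set Bm : Matrix (Fin k) (Fin k) ℂ := (1 : Matrix (Fin k) (Fin k) ℂ) - v with hB
  have horth : ((A * star Bm).trace).re = 0 := orth_key π hπ x y v hx hy hv
  have hpy : ‖A + Bm‖ ^ 2 = ‖A‖ ^ 2 + ‖Bm‖ ^ 2 := pythagoras A Bm horth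
  have hd : ‖A‖ ≤ ‖A + Bm‖ := by
    nlinarith [norm_nonneg A, norm_nonneg Bm, norm_nonneg (A + Bm)]
  have ht : ‖Bm‖ ≤ ‖A + Bm‖ := by
    nlinarith [norm_nonneg A, norm_nonneg Bm, norm_nonneg (A + Bm)]
  have hE1 : ‖exp x - exp y - A‖ ≤ (1/9) * ‖A‖ := exp_diff x y hxr hyr
  have hE2 : ‖(exp y - 1) * Bm‖ ≤ (1/9) * ‖Bm‖ :=
    le_trans (nrm_mul_le_opN _ _)
      (mul_le_mul_of_nonneg_right (opN_exp_sub_one y hyr) (norm_nonneg _))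
  have hdecomp : A + Bm = (exp x - exp y * v) -
      ((exp x - exp y - A) + (exp y - 1) * Bm) := by
    rw [hA, hB]; noncomm_ring
  have hbig : ‖A + Bm‖ ≤ ‖exp x - exp y * v‖ +
      (‖exp x - exp y - A‖ + ‖(exp y - 1) * Bm‖) := by
    calc ‖A + Bm‖ = ‖(exp x - exp y * v) -
        ((exp x - exp y - A) + (exp y - 1) * Bm)‖ := by rw [← hdecomp]
      _ ≤ ‖exp x - exp y * v‖ + ‖(exp x - exp y - A) + (exp y - 1) * Bm‖ :=
          norm_sub_le _ _
      _ ≤ ‖exp x - exp y * v‖ +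
          (‖exp x - exp y - A‖ + ‖(exp y - 1) * Bm‖) := by
          have := norm_add_le (exp x - exp y - A) ((exp y - 1) * Bm)
          linarith
  linarith [norm_nonneg (A + Bm), norm_nonneg A, norm_nonneg Bm,
    norm_nonneg (exp x - exp y * v)]

end Stmt12Aux

/-- Lemma 8.2: there are uniform constants `λ, r > 0` such
that for any unital *-homomorphism `π : M_{n_1}(ℂ) ⊕ ⋯ ⊕ M_{n_p}(ℂ) → M_k(ℂ)`
with commutant unitary group `H`, and all `x, y` in the orthogonal complement
`𝒳` of the Lie algebra of `H` with `‖x‖, ‖y‖ < r`, one has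
`inf_{v ∈ H} |exp(x) − exp(y)v|₂ ≥ λ|x − y|₂`. -/
theorem stmt_12 :
    ∃ lam > (0 : ℝ), ∃ r > (0 : ℝ),
      ∀ (k p : ℕ) (n : Fin p → ℕ) (π : NA n →⋆ₐ[ℂ] Matrix (Fin k) (Fin k) ℂ),
        ∀ x y : Matrix (Fin k) (Fin k) ℂ,
          memX (⇑π) x → memX (⇑π) y → opN x < r → opN y < r →
            ∀ v ∈ Matrix.unitaryGroup (Fin k) ℂ,
              (∀ w : NA n, v * π w = π w * v) →
                lam * hsN (x - y) ≤
                  hsN (NormedSpace.exp x - NormedSpace.exp y * v) := by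
  refine ⟨1/2, by norm_num, 1/10, by norm_num, ?_⟩
  intro k p n π x y hx hy hxr hyr v _ hvcomm
  have hπ : ∀ w, π (star w) = star (π w) := fun w => map_star π w
  have hmain := Stmt12Aux.main_estimate (⇑π) hπ x y v hx hy hxr.le hyr.le hvcomm
  rw [Stmt12Aux.hsN_eq, Stmt12Aux.hsN_eq]
  rw [div_eq_mul_inv, div_eq_mul_inv, ← mul_assoc]
  exact mul_le_mul_of_nonneg_right hmain (inv_nonneg.mpr (Real.sqrt_nonneg _))
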